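/- In the polynomial ring ℂ[α,β,γ,δ] in four variables, the ideal of all polynomials vanishing at every point (α,β,γ,δ) ∈ ℂ⁴ satisfying α = −3δ² and βγ = 8δ³ equals the ideal generated by the two polynomials α + 3δ² and βγ − 8δ³. (Hence the coordinate ring of S = 𝕊 ∩ 𝒩 for sl₃, f = E₂₁, is ℂ[α,β,γ,δ]/(α + 3δ², βγ − 8δ³) ≅ ℂ[β,γ,δ]/(8δ³ − βγ).) -/

import Mathlib

open MvPolynomial Polynomial

noncomputable section AuxVan

lemma primeX0 : Prime ((X 0 : MvPolynomial (Fin 2) ℂ)) := by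
  refine (MulEquiv.prime_iff
    (MvPolynomial.finSuccEquiv ℂ 1).toRingEquiv.toMulEquiv).mp ?_
  have : (MvPolynomial.finSuccEquiv ℂ 1).toRingEquiv.toMulEquiv (X 0) = Polynomial.X :=
    MvPolynomial.finSuccEquiv_X_zero
  rw [this]
  exact Polynomial.prime_X

def qAux : MvPolynomial (Fin 3) ℂ := X 1 * X 2 - 8 * (X 0) ^ 3

lemma finSuccEquiv_qAux : (MvPolynomial.finSuccEquiv ℂ 2) qAux
    = Polynomial.C (X 0 * X 1) - 8 * Polynomial.X ^ 3 := by
  have h1 : (MvPolynomial.finSuccEquiv ℂ 2) (X 1) = Polynomial.C (X 0) :=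
    MvPolynomial.finSuccEquiv_X_succ (j := 0)
  have h2 : (MvPolynomial.finSuccEquiv ℂ 2) (X 2) = Polynomial.C (X 1) :=
    MvPolynomial.finSuccEquiv_X_succ (j := 1)
  have h0 : (MvPolynomial.finSuccEquiv ℂ 2) (X 0) = Polynomial.X :=
    MvPolynomial.finSuccEquiv_X_zero
  simp [qAux, h1, h2, h0, map_ofNat]

def fAux : Polynomial (MvPolynomial (Fin 2) ℂ) :=
  Polynomial.C (X 0 * X 1) - 8 * Polynomial.X ^ 3

lemma natDegree_fAux : fAux.natDegree = 3 := by
  unfold fAux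
  compute_degree!

lemma coeff_fAux_zero : fAux.coeff 0 = X 0 * X 1 := by
  simp [fAux, Polynomial.coeff_X_pow]

lemma coeff_fAux_three : fAux.coeff 3 = -8 := by
  have : ((8 : Polynomial (MvPolynomial (Fin 2) ℂ))) = Polynomial.C 8 :=
    (map_ofNat (Polynomial.C : MvPolynomial (Fin 2) ℂ →+* _) 8).symm
  simp [fAux, this, Polynomial.coeff_X_pow, Polynomial.coeff_C]

lemma X0_not_dvd_const (c : ℂ) (hc : c ≠ 0) :
    ¬ (X 0 : MvPolynomial (Fin 2) ℂ) ∣ MvPolynomial.C c := by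
  rintro ⟨g, hg⟩
  have := congrArg (MvPolynomial.eval (fun _ => (0 : ℂ))) hg
  simp at this
  exact hc this

lemma irreducible_fAux : Irreducible fAux := by
  have hP : (Ideal.span {(X 0 : MvPolynomial (Fin 2) ℂ)}).IsPrime :=
    (Ideal.span_singleton_prime (MvPolynomial.X_ne_zero 0)).mpr primeX0
  have hE : fAux.IsEisensteinAt (Ideal.span {(X 0 : MvPolynomial (Fin 2) ℂ)}) := by
    constructor
    · rw [Polynomial.leadingCoeff, natDegree_fAux, coeff_fAux_three]
      intro h
      rw [Ideal.mem_span_singleton] at h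
      have h8 : ((-8 : MvPolynomial (Fin 2) ℂ)) = MvPolynomial.C (-8) := by
        rw [map_neg, map_ofNat]
      rw [h8] at h
      exact X0_not_dvd_const (-8) (by norm_num) h
    · intro n hn
      rw [natDegree_fAux] at hn
      interval_cases n
      · rw [coeff_fAux_zero, Ideal.mem_span_singleton]
        exact Dvd.intro _ rfl
      · simp [fAux, Polynomial.coeff_X_pow]
      · simp [fAux, Polynomial.coeff_X_pow]
    · rw [coeff_fAux_zero, Ideal.span_singleton_pow, Ideal.mem_span_singleton]
      rintro ⟨g, hg⟩
      rw [pow_two, mul_assoc] at hg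
      have h2 : (X 1 : MvPolynomial (Fin 2) ℂ) = X 0 * g :=
        mul_left_cancel₀ (MvPolynomial.X_ne_zero 0) hg
      have := congrArg (MvPolynomial.eval
        (fun i => if i = 0 then (0:ℂ) else 1)) h2
      simp at this
  have hprim : fAux.IsPrimitive := by
    intro r hr
    rw [Polynomial.C_dvd_iff_dvd_coeff] at hr
    have h3 := hr 3
    rw [coeff_fAux_three] at h3
    have hu : IsUnit ((-8 : MvPolynomial (Fin 2) ℂ)) := by
      have h8 : ((-8 : MvPolynomial (Fin 2) ℂ)) = MvPolynomial.C (-8) := by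
        rw [map_neg, map_ofNat]
      rw [h8]
      exact (isUnit_iff_ne_zero.mpr (by norm_num : (-8:ℂ) ≠ 0)).map MvPolynomial.C
    exact isUnit_of_dvd_unit h3 hu
  exact hE.irreducible hP hprim (by rw [natDegree_fAux]; norm_num)

lemma prime_qAux : Prime qAux := by
  refine (MulEquiv.prime_iff
    (MvPolynomial.finSuccEquiv ℂ 2).toRingEquiv.toMulEquiv).mp ?_
  have : (MvPolynomial.finSuccEquiv ℂ 2).toRingEquiv.toMulEquiv qAux = fAux :=
    finSuccEquiv_qAux
  rw [this]
  exact (UniqueFactorizationMonoid.irreducible_iff_prime).mp irreducible_fAux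

def phiAux : MvPolynomial (Fin 4) ℂ →ₐ[ℂ] MvPolynomial (Fin 3) ℂ :=
  aeval ![-3 * X 0 ^ 2, X 1, X 2, X 0]

def jAux : MvPolynomial (Fin 3) ℂ →ₐ[ℂ] MvPolynomial (Fin 4) ℂ :=
  aeval ![X 3, X 1, X 2]

def IAux : Ideal (MvPolynomial (Fin 4) ℂ) :=
  Ideal.span {(X 0 : MvPolynomial (Fin 4) ℂ) + 3 * (X 3) ^ 2,
    X 1 * X 2 - 8 * (X 3) ^ 3}

lemma g1_mem : (X 0 : MvPolynomial (Fin 4) ℂ) + 3 * (X 3) ^ 2 ∈ IAux :=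
  Ideal.subset_span (Set.mem_insert _ _)

lemma g2_mem : (X 1 * X 2 - 8 * (X 3) ^ 3 : MvPolynomial (Fin 4) ℂ) ∈ IAux :=
  Ideal.subset_span (Set.mem_insert_of_mem _ rfl)

lemma sub_jphi_mem (p : MvPolynomial (Fin 4) ℂ) : p - jAux (phiAux p) ∈ IAux := by
  induction p using MvPolynomial.induction_on with
  | C a => simp [phiAux, jAux]
  | add p q hp hq =>
      have : p + q - jAux (phiAux (p + q)) = (p - jAux (phiAux p)) + (q - jAux (phiAux q)) := by
        simp only [map_add]; ring
      rw [this]; exact add_mem hp hq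
  | mul_X p i hp =>
      have key : X i - jAux (phiAux (X i)) ∈ IAux := by
        fin_cases i
        · show X 0 - jAux (phiAux (X 0)) ∈ IAux
          have h0 : X 0 - jAux (phiAux (X 0))
              = (X 0 : MvPolynomial (Fin 4) ℂ) + 3 * (X 3) ^ 2 := by
            simp [phiAux, jAux, map_ofNat]
          rw [h0]; exact g1_mem
        · show X 1 - jAux (phiAux (X 1)) ∈ IAux
          simp [phiAux, jAux]
        · show X 2 - jAux (phiAux (X 2)) ∈ IAux
          simp [phiAux, jAux]
        · show X 3 - jAux (phiAux (X 3)) ∈ IAux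
          simp [phiAux, jAux]
      have : p * X i - jAux (phiAux (p * X i))
          = (p - jAux (phiAux p)) * X i + jAux (phiAux p) * (X i - jAux (phiAux (X i))) := by
        simp only [map_mul]; ring
      rw [this]
      exact add_mem (Ideal.mul_mem_right _ _ hp) (Ideal.mul_mem_left _ _ key)

lemma jAux_qAux : jAux qAux = X 1 * X 2 - 8 * (X 3) ^ 3 := by
  simp [jAux, qAux, map_ofNat]

lemma IAux_eq_ker :
    IAux = RingHom.ker ((Ideal.Quotient.mk (Ideal.span {qAux})).comp
      (phiAux : MvPolynomial (Fin 4) ℂ →+* MvPolynomial (Fin 3) ℂ)) := by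
  apply le_antisymm
  · rw [IAux, Ideal.span_le]
    rintro g (rfl | rfl)
    · rw [SetLike.mem_coe, RingHom.mem_ker]
      simp only [RingHom.comp_apply, AlgHom.toRingHom_eq_coe, RingHom.coe_coe]
      have h : phiAux ((X 0 : MvPolynomial (Fin 4) ℂ) + 3 * (X 3) ^ 2) = 0 := by
        simp [phiAux, map_ofNat]
      rw [h, map_zero]
    · rw [SetLike.mem_coe, RingHom.mem_ker]
      simp only [RingHom.comp_apply, AlgHom.toRingHom_eq_coe, RingHom.coe_coe]
      have h : phiAux ((X 1 * X 2 - 8 * (X 3) ^ 3 : MvPolynomial (Fin 4) ℂ)) = qAux := by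
        simp [phiAux, qAux, map_ofNat]
      rw [h]
      exact Ideal.Quotient.eq_zero_iff_mem.mpr (Ideal.subset_span rfl)
  · intro p hp
    rw [RingHom.mem_ker, RingHom.comp_apply, Ideal.Quotient.eq_zero_iff_mem,
      Ideal.mem_span_singleton] at hp
    simp only [AlgHom.toRingHom_eq_coe, RingHom.coe_coe] at hp
    obtain ⟨h, hh⟩ := hp
    have hdecomp : p = (p - jAux (phiAux p)) + jAux qAux * jAux h := by
      rw [← map_mul, ← hh]; ring
    rw [hdecomp]
    exact add_mem (sub_jphi_mem p)
      (by rw [jAux_qAux]; exact Ideal.mul_mem_right _ _ g2_mem)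

/-- In `ℂ[α,β,γ,δ]` (with `α = X 0`, `β = X 1`, `γ = X 2`, `δ = X 3`), the ideal
of polynomials vanishing on `{(α,β,γ,δ) ∈ ℂ⁴ : α = −3δ², βγ = 8δ³}` is generated
by `α + 3δ²` and `βγ − 8δ³`. -/
theorem vanishingIdeal_slice_nilpotent_cone :
    MvPolynomial.vanishingIdeal ℂ
        {x : Fin 4 → ℂ | x 0 = -3 * (x 3) ^ 2 ∧ x 1 * x 2 = 8 * (x 3) ^ 3} =
      Ideal.span {(X 0 : MvPolynomial (Fin 4) ℂ) + 3 * (X 3) ^ 2,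
        X 1 * X 2 - 8 * (X 3) ^ 3} := by
  have hprime : IAux.IsPrime := by
    rw [IAux_eq_ker]
    haveI : (Ideal.span {qAux}).IsPrime :=
      (Ideal.span_singleton_prime prime_qAux.ne_zero).mpr prime_qAux
    exact RingHom.ker_isPrime _
  have hset : {x : Fin 4 → ℂ | x 0 = -3 * (x 3) ^ 2 ∧ x 1 * x 2 = 8 * (x 3) ^ 3}
      = MvPolynomial.zeroLocus ℂ IAux := by
    ext x
    simp only [Set.mem_setOf_eq, MvPolynomial.mem_zeroLocus_iff]
    constructor
    · rintro ⟨h1, h2⟩ p hp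
      have hle : IAux ≤ RingHom.ker (MvPolynomial.eval x) := by
        rw [IAux, Ideal.span_le]
        rintro g (rfl | rfl) <;> rw [SetLike.mem_coe, RingHom.mem_ker]
        · simp [map_ofNat]
          linear_combination h1
        · simp [map_ofNat]
          linear_combination h2
      exact hle hp
    · intro hx
      have e1 := hx _ g1_mem
      have e2 := hx _ g2_mem
      simp [map_ofNat] at e1 e2
      constructor
      · linear_combination e1
      · linear_combination e2
  show MvPolynomial.vanishingIdeal ℂ _ = IAux
  rw [hset, MvPolynomial.vanishingIdeal_zeroLocus_eq_radical, hprime.radical]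

end AuxVan
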